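/- Let k ≥ 0 be an integer, let c⁺, c⁻ ∈ ℂ, and let p : [0,π] → ℂ be continuous. Then there exist a constant c ∈ ℂ and twice continuously differentiable functions f⁻ : [0,π/2] → ℂ and f⁺ : [π/2,π] → ℂ such that: (f⁻)''(θ) + (k+2)² f⁻(θ) = c⁻ p(θ) for all θ ∈ [0,π/2]; (f⁺)''(θ) + (k+2)² f⁺(θ) = c⁺ p(θ) for all θ ∈ [π/2,π]; f⁺(π/2) = f⁻(π/2) and (f⁺)'(π/2) = (f⁻)'(π/2); f⁻(0) = 0; and f⁺(π) = (−1)^{k+1} c π. -/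

import Mathlib

open Set Real intervalIntegral MeasureTheory

lemma ode_sol (l : ℝ) (hl : l ≠ 0) (g : ℝ → ℂ) (hg : Continuous g)
    (a : ℝ) (u0 u1 : ℂ) :
    ∃ f : ℝ → ℂ, ContDiff ℝ 2 f ∧ f a = u0 ∧ deriv f a = u1 ∧
      ∀ θ : ℝ, deriv (deriv f) θ + (l : ℂ) ^ 2 * f θ = g θ := by
  have hlc : (l : ℂ) ≠ 0 := by exact_mod_cast hl
  set C : ℝ → ℂ := fun θ => ((Real.cos (l * θ) : ℝ) : ℂ) with hC
  set S : ℝ → ℂ := fun θ => ((Real.sin (l * θ) : ℝ) : ℂ) with hS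
  have hCcont : Continuous C := by continuity
  have hScont : Continuous S := by continuity
  have hCd : ∀ θ, HasDerivAt C (-(l : ℂ) * S θ) θ := by
    intro θ
    have h1 : HasDerivAt (fun x : ℝ => Real.cos (l * x)) (-Real.sin (l * θ) * l) θ := by
      exact (((hasDerivAt_id' θ).const_mul l).cos).congr_deriv (by ring)
    have := h1.ofReal_comp
    convert this using 1
    simp [hS]; ring
  have hSd : ∀ θ, HasDerivAt S ((l : ℂ) * C θ) θ := by
    intro θ
    have h1 : HasDerivAt (fun x : ℝ => Real.sin (l * x)) (Real.cos (l * θ) * l) θ := by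
      exact (((hasDerivAt_id' θ).const_mul l).sin).congr_deriv (by ring)
    have := h1.ofReal_comp
    convert this using 1
    simp [hC]; ring
  set A : ℝ → ℂ := fun θ => ∫ s in a..θ, C s * g s with hA
  set B : ℝ → ℂ := fun θ => ∫ s in a..θ, S s * g s with hB
  have hCg : Continuous fun s => C s * g s := hCcont.mul hg
  have hSg : Continuous fun s => S s * g s := hScont.mul hg
  have hAd : ∀ θ, HasDerivAt A (C θ * g θ) θ := fun θ =>
    integral_hasDerivAt_right (hCg.intervalIntegrable a θ)
      (hCg.stronglyMeasurableAtFilter _ _) hCg.continuousAt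
  have hBd : ∀ θ, HasDerivAt B (S θ * g θ) θ := fun θ =>
    integral_hasDerivAt_right (hSg.intervalIntegrable a θ)
      (hSg.stronglyMeasurableAtFilter _ _) hSg.continuousAt
  set α : ℂ := C a * u0 - S a * (u1 / l) with hα
  set β : ℂ := S a * u0 + C a * (u1 / l) with hβ
  set f : ℝ → ℂ := fun θ => α * C θ + β * S θ + (1 / l : ℂ) * (S θ * A θ - C θ * B θ) with hf
  set f1 : ℝ → ℂ := fun θ => -(l : ℂ) * α * S θ + (l : ℂ) * β * C θ + C θ * A θ + S θ * B θ
    with hf1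
  have hCS : ∀ θ, C θ * C θ + S θ * S θ = 1 := by
    intro θ
    have h : Real.cos (l * θ) * Real.cos (l * θ) + Real.sin (l * θ) * Real.sin (l * θ) = 1 := by
      nlinarith [Real.sin_sq_add_cos_sq (l * θ)]
    simp only [hC, hS]
    exact_mod_cast h
  have hfd : ∀ θ, HasDerivAt f (f1 θ) θ := by
    intro θ
    have h := (((hCd θ).const_mul α).add ((hSd θ).const_mul β)).add
      ((((hSd θ).mul (hAd θ)).sub ((hCd θ).mul (hBd θ))).const_mul (1 / l : ℂ))
    refine h.congr_deriv ?_
    simp only [hf1]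
    field_simp
    ring
  have hf1d : ∀ θ, HasDerivAt f1 (-(l : ℂ) ^ 2 * f θ + g θ) θ := by
    intro θ
    have h := ((((hSd θ).const_mul (-(l : ℂ) * α)).add ((hCd θ).const_mul ((l : ℂ) * β))).add
      ((hCd θ).mul (hAd θ))).add ((hSd θ).mul (hBd θ))
    refine h.congr_deriv ?_
    symm
    have h1 := hCS θ
    have hl2 : (1 / (l : ℂ)) * (l : ℂ) = 1 := by field_simp
    simp only [hf, hf1]
    linear_combination (-(g θ)) * h1 - (l : ℂ) * (S θ * A θ - C θ * B θ) * hl2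
  have hdf : deriv f = f1 := funext fun θ => (hfd θ).deriv
  have hddf : ∀ θ, deriv (deriv f) θ = -(l : ℂ) ^ 2 * f θ + g θ := by
    intro θ; rw [hdf]; exact (hf1d θ).deriv
  have hfdiff : Differentiable ℝ f := fun θ => (hfd θ).differentiableAt
  have hf1diff : Differentiable ℝ f1 := fun θ => (hf1d θ).differentiableAt
  have hcd : ContDiff ℝ 2 f := by
    rw [show (2 : WithTop ℕ∞) = 1 + 1 from rfl, contDiff_succ_iff_deriv]
    refine ⟨hfdiff, by simp, ?_⟩
    rw [hdf, contDiff_one_iff_deriv]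
    refine ⟨hf1diff, ?_⟩
    have : deriv f1 = fun θ => -(l : ℂ) ^ 2 * f θ + g θ := funext fun θ => (hf1d θ).deriv
    rw [this]
    exact (continuous_const.mul hfdiff.continuous).add hg
  refine ⟨f, hcd, ?_, ?_, ?_⟩
  · simp only [hf]
    have hAa : A a = 0 := by simp [hA]
    have hBa : B a = 0 := by simp [hB]
    rw [hAa, hBa]
    have h1 := hCS a
    field_simp [hα, hβ]
    linear_combination u0 * (l : ℂ) * h1
  · rw [hdf]
    simp only [hf1]
    have hAa : A a = 0 := by simp [hA]
    have hBa : B a = 0 := by simp [hB]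
    rw [hAa, hBa]
    have h1 := hCS a
    field_simp [hα, hβ]
    linear_combination u1 * (l : ℂ) * (l : ℂ)⁻¹ * h1 + u1 * (mul_inv_cancel₀ hlc)
  · intro θ
    rw [hddf θ]
    ring

theorem stmt_2 (k : ℕ) (cp cm : ℂ) (p : ℝ → ℂ)
    (hp : ContinuousOn p (Set.Icc 0 π)) :
    ∃ (c : ℂ) (fm fp : ℝ → ℂ),
      ContDiff ℝ 2 fm ∧ ContDiff ℝ 2 fp ∧
      (∀ θ ∈ Set.Icc (0 : ℝ) (π / 2),
        deriv (deriv fm) θ + ((k : ℂ) + 2) ^ 2 * fm θ = cm * p θ) ∧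
      (∀ θ ∈ Set.Icc (π / 2) π,
        deriv (deriv fp) θ + ((k : ℂ) + 2) ^ 2 * fp θ = cp * p θ) ∧
      fp (π / 2) = fm (π / 2) ∧
      deriv fp (π / 2) = deriv fm (π / 2) ∧
      fm 0 = 0 ∧
      fp π = (-1 : ℂ) ^ (k + 1) * c * (π : ℂ) := by
  set q : ℝ → ℂ := fun θ => p (max 0 (min θ π)) with hq
  have hqc : Continuous q := by
    apply hp.comp_continuous
    · exact continuous_const.max (continuous_id.min continuous_const)
    · intro x
      exact ⟨le_max_left _ _, max_le Real.pi_pos.le (min_le_right _ _)⟩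
  have hqeq : ∀ θ ∈ Set.Icc (0 : ℝ) π, q θ = p θ := by
    intro θ hθ
    simp only [hq]
    rw [min_eq_left hθ.2, max_eq_right hθ.1]
  set l : ℝ := (k : ℝ) + 2 with hl
  have hl0 : l ≠ 0 := by positivity
  have hlcast : ((l : ℝ) : ℂ) = (k : ℂ) + 2 := by push_cast [hl]; ring
  obtain ⟨fm, hfm2, hfm0, _, hfmode⟩ :=
    ode_sol l hl0 (fun θ => cm * q θ) (continuous_const.mul hqc) 0 0 0
  obtain ⟨fp, hfp2, hfpval, hfpder, hfpode⟩ :=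
    ode_sol l hl0 (fun θ => cp * q θ) (continuous_const.mul hqc) (π / 2)
      (fm (π / 2)) (deriv fm (π / 2))
  refine ⟨(-1 : ℂ) ^ (k + 1) * fp π / (π : ℂ), fm, fp, hfm2, hfp2, ?_, ?_, hfpval, hfpder,
    hfm0, ?_⟩
  · intro θ hθ
    have h := hfmode θ
    rw [hlcast] at h
    rw [h, hqeq θ ⟨hθ.1, hθ.2.trans (by linarith [Real.pi_pos])⟩]
  · intro θ hθ
    have h := hfpode θ
    rw [hlcast] at h
    rw [h, hqeq θ ⟨le_trans (by positivity) hθ.1, hθ.2⟩]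
  · have hπ : ((π : ℝ) : ℂ) ≠ 0 := by
      exact_mod_cast Real.pi_ne_zero
    have hsq : ((-1 : ℂ) ^ (k + 1)) * ((-1 : ℂ) ^ (k + 1)) = 1 := by
      rw [← pow_add, show k + 1 + (k + 1) = 2 * (k + 1) by ring, pow_mul]
      norm_num
    field_simp
    rw [sq, hsq, mul_one]
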